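/- Define G(n, m1, m2, k) recursively by G(0,0,0,0) = 1, G(n,m1,m2,k) = 0 whenever k < max(m1,m2) or k > min(n, m1+m2), and otherwise G(n,m1,m2,k) = (n−m1)(n−m2)·G(n−1,m1,m2,k) + m1(n−m2)·G(n−1,m1−1,m2,k−1) + (n−m1)m2·G(n−1,m1,m2−1,k−1) + m1·m2·G(n−1,m1−1,m2−1,k−1). Then for max(m1,m2) ≤ k ≤ min(n, m1+m2), setting b1 = k−m2, b2 = k−m1, b12 = m1+m2−k, we have G(n,m1,m2,k) = m1!·m2!·(n−m1)!·(n−m2)!·n! / (b1!·b2!·b12!·(n−k)!). -/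
import Mathlib


open Nat

/-- The recursively defined count of permutation pairs with exactly `k` faulty positions. -/
def G : ℕ → ℕ → ℕ → ℕ → ℕ
  | 0, m1, m2, k => if m1 = 0 ∧ m2 = 0 ∧ k = 0 then 1 else 0
  | n + 1, m1, m2, k =>
      if k < max m1 m2 ∨ min (n + 1) (m1 + m2) < k then 0
      else (n + 1 - m1) * (n + 1 - m2) * G n m1 m2 k
        + m1 * (n + 1 - m2) * G n (m1 - 1) m2 (k - 1)
        + (n + 1 - m1) * m2 * G n m1 (m2 - 1) (k - 1)
        + m1 * m2 * G n (m1 - 1) (m2 - 1) (k - 1)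

lemma G_zero (n m1 m2 k : ℕ) (h : k < max m1 m2 ∨ min n (m1 + m2) < k) :
    G n m1 m2 k = 0 := by
  cases n with
  | zero => simp only [G]; rw [if_neg (by omega)]
  | succ n => simp only [G]; rw [if_pos h]

lemma key (N : ℕ) : ∀ b1 b2 b12 r, b1 + b2 + b12 + r = N →
    (G (b1 + b2 + b12 + r) (b1 + b12) (b2 + b12) (b1 + b2 + b12) : ℚ)
        * ((b1)! * (b2)! * (b12)! * (r)!)
      = (b1 + b12)! * (b2 + b12)! * (b2 + r)! * (b1 + r)! * (b1 + b2 + b12 + r)! := by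
  induction N with
  | zero =>
    intro b1 b2 b12 r h
    obtain ⟨rfl, rfl, rfl, rfl⟩ : b1 = 0 ∧ b2 = 0 ∧ b12 = 0 ∧ r = 0 := by omega
    simp [G]
  | succ N ih =>
    intro b1 b2 b12 r h
    rw [show b1 + b2 + b12 + r = N + 1 from h]
    simp only [G]
    rw [if_neg (by omega)]
    rw [show N + 1 - (b1 + b12) = b2 + r by omega,
        show N + 1 - (b2 + b12) = b1 + r by omega]
    have h1 : ((b2 : ℚ) + r) * ((b1 : ℚ) + r)
          * (G N (b1 + b12) (b2 + b12) (b1 + b2 + b12) : ℚ)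
          * ((b1)! * (b2)! * (b12)! * (r)!)
        = (r : ℚ) * ((b1 + b12)! * (b2 + b12)! * (b2 + r)! * (b1 + r)! * (N)!) := by
      rcases Nat.eq_zero_or_pos r with rfl | hr
      · rw [G_zero N _ _ _ (Or.inr (by omega))]; simp
      · obtain ⟨r', rfl⟩ : ∃ r', r = r' + 1 := ⟨r - 1, by omega⟩
        have hh := ih b1 b2 b12 r' (by omega)
        rw [show N = b1 + b2 + b12 + r' by omega,
            show b2 + (r' + 1) = b2 + r' + 1 by omega,
            show b1 + (r' + 1) = b1 + r' + 1 by omega]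
        push_cast [Nat.factorial_succ] at hh ⊢
        linear_combination ((b2 : ℚ) + r' + 1) * ((b1 : ℚ) + r' + 1) * ((r' : ℚ) + 1) * hh
    have h2 : ((b1 : ℚ) + b12) * ((b1 : ℚ) + r)
          * (G N (b1 + b12 - 1) (b2 + b12) (b1 + b2 + b12 - 1) : ℚ)
          * ((b1)! * (b2)! * (b12)! * (r)!)
        = (b1 : ℚ) * ((b1 + b12)! * (b2 + b12)! * (b2 + r)! * (b1 + r)! * (N)!) := by
      rcases Nat.eq_zero_or_pos b1 with rfl | hb
      · rcases Nat.eq_zero_or_pos (b2 + b12) with hz | hp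
        · obtain rfl : b12 = 0 := by omega
          simp
        · rw [G_zero N _ _ _ (Or.inl (by omega))]; simp
      · obtain ⟨b1', rfl⟩ : ∃ b1', b1 = b1' + 1 := ⟨b1 - 1, by omega⟩
        have hh := ih b1' b2 b12 r (by omega)
        rw [show b1' + 1 + b12 - 1 = b1' + b12 by omega,
            show b1' + 1 + b2 + b12 - 1 = b1' + b2 + b12 by omega,
            show N = b1' + b2 + b12 + r by omega,
            show b1' + 1 + b12 = b1' + b12 + 1 by omega,
            show b1' + 1 + r = b1' + r + 1 by omega]
        push_cast [Nat.factorial_succ] at hh ⊢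
        linear_combination ((b1' : ℚ) + b12 + 1) * ((b1' : ℚ) + r + 1) * ((b1' : ℚ) + 1) * hh
    have h3 : ((b2 : ℚ) + r) * ((b2 : ℚ) + b12)
          * (G N (b1 + b12) (b2 + b12 - 1) (b1 + b2 + b12 - 1) : ℚ)
          * ((b1)! * (b2)! * (b12)! * (r)!)
        = (b2 : ℚ) * ((b1 + b12)! * (b2 + b12)! * (b2 + r)! * (b1 + r)! * (N)!) := by
      rcases Nat.eq_zero_or_pos b2 with rfl | hb
      · rcases Nat.eq_zero_or_pos (b1 + b12) with hz | hp
        · obtain rfl : b12 = 0 := by omega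
          simp
        · rw [G_zero N _ _ _ (Or.inl (by omega))]; simp
      · obtain ⟨b2', rfl⟩ : ∃ b2', b2 = b2' + 1 := ⟨b2 - 1, by omega⟩
        have hh := ih b1 b2' b12 r (by omega)
        rw [show b2' + 1 + b12 - 1 = b2' + b12 by omega,
            show b1 + (b2' + 1) + b12 - 1 = b1 + b2' + b12 by omega,
            show N = b1 + b2' + b12 + r by omega,
            show b2' + 1 + b12 = b2' + b12 + 1 by omega,
            show b2' + 1 + r = b2' + r + 1 by omega]
        push_cast [Nat.factorial_succ] at hh ⊢
        linear_combination ((b2' : ℚ) + b12 + 1) * ((b2' : ℚ) + r + 1) * ((b2' : ℚ) + 1) * hh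
    have h4 : ((b1 : ℚ) + b12) * ((b2 : ℚ) + b12)
          * (G N (b1 + b12 - 1) (b2 + b12 - 1) (b1 + b2 + b12 - 1) : ℚ)
          * ((b1)! * (b2)! * (b12)! * (r)!)
        = (b12 : ℚ) * ((b1 + b12)! * (b2 + b12)! * (b2 + r)! * (b1 + r)! * (N)!) := by
      rcases Nat.eq_zero_or_pos b12 with rfl | hb
      · rcases Nat.eq_zero_or_pos b1 with rfl | h1p
        · simp
        · rcases Nat.eq_zero_or_pos b2 with rfl | h2p
          · simp
          · rw [G_zero N _ _ _ (Or.inr (by omega))]; simp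
      · obtain ⟨b12', rfl⟩ : ∃ b12', b12 = b12' + 1 := ⟨b12 - 1, by omega⟩
        have hh := ih b1 b2 b12' r (by omega)
        rw [show b1 + (b12' + 1) - 1 = b1 + b12' by omega,
            show b2 + (b12' + 1) - 1 = b2 + b12' by omega,
            show b1 + b2 + (b12' + 1) - 1 = b1 + b2 + b12' by omega,
            show N = b1 + b2 + b12' + r by omega,
            show b1 + (b12' + 1) = b1 + b12' + 1 by omega,
            show b2 + (b12' + 1) = b2 + b12' + 1 by omega]
        push_cast [Nat.factorial_succ] at hh ⊢
        linear_combination ((b1 : ℚ) + b12' + 1) * ((b2 : ℚ) + b12' + 1) * ((b12' : ℚ) + 1) * hh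
    have hf : (((N + 1)! : ℕ) : ℚ) = ((N : ℚ) + 1) * (N)! := by
      rw [Nat.factorial_succ]; push_cast; ring
    have hsum : (b1 : ℚ) + b2 + b12 + r = (N : ℚ) + 1 := by exact_mod_cast h
    push_cast
    linear_combination h1 + h2 + h3 + h4
      - ((b1 + b12)! * (b2 + b12)! * (b2 + r)! * (b1 + r)! : ℚ) * hf
      + ((b1 + b12)! * (b2 + b12)! * (b2 + r)! * (b1 + r)! * (N)! : ℚ) * hsum

/-- Closed form for `G`. -/
theorem stmt_2 (n m1 m2 k : ℕ) (hm1 : m1 ≤ n) (hm2 : m2 ≤ n)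
    (hk₁ : max m1 m2 ≤ k) (hk₂ : k ≤ min n (m1 + m2)) :
    (G n m1 m2 k : ℚ)
      = (m1 ! * m2 ! * (n - m1)! * (n - m2)! * n ! : ℚ)
        / ((k - m2)! * (k - m1)! * (m1 + m2 - k)! * (n - k)!) := by
  obtain ⟨b1, b2, b12, r, h1, h2, h3, h4⟩ :
      ∃ b1 b2 b12 r, n = b1 + b2 + b12 + r ∧ m1 = b1 + b12 ∧ m2 = b2 + b12 ∧
        k = b1 + b2 + b12 :=
    ⟨k - m2, k - m1, m1 + m2 - k, n - k, by omega, by omega, by omega, by omega⟩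
  subst h1 h2 h3 h4
  have key' := key (b1 + b2 + b12 + r) b1 b2 b12 r rfl
  rw [show b1 + b2 + b12 + r - (b1 + b12) = b2 + r by omega,
      show b1 + b2 + b12 + r - (b2 + b12) = b1 + r by omega,
      show b1 + b2 + b12 - (b2 + b12) = b1 by omega,
      show b1 + b2 + b12 - (b1 + b12) = b2 by omega,
      show b1 + b12 + (b2 + b12) - (b1 + b2 + b12) = b12 by omega,
      show b1 + b2 + b12 + r - (b1 + b2 + b12) = r by omega]
  rw [eq_div_iff (by positivity)]
  linear_combination key'
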